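/- For every dimension d ≥ 1 there exists a constant c > 0, depending only on d, such that for every real d × d matrix A with operator norm at most 1 and every t ∈ [0, 1/2], the matrix B := I + t·A is invertible and ‖ I − B⁻¹ · B⁻ᵀ · det(B) − t·( A + Aᵀ − trace(A)·I ) ‖ ≤ c·t², where ‖·‖ is the operator norm, I the d × d identity matrix, and B⁻ᵀ the transpose of B⁻¹. -/

import Mathlib

open Matrix

/-- The spectral norm of a real `d × d` matrix: the operator norm of the
induced linear map on the Euclidean space `ℝ^d`. -/
noncomputable def specNorm {d : ℕ} (A : Matrix (Fin d) (Fin d) ℝ) : ℝ :=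
  ‖Matrix.toEuclideanCLM (𝕜 := ℝ) A‖

lemma prod_one_add_sub_one_le {ι : Type*} (s : Finset ι) (x : ι → ℝ) (t : ℝ)
    (ht0 : 0 ≤ t) (ht1 : t ≤ 1) (hx : ∀ i ∈ s, |x i| ≤ t) :
    |∏ i ∈ s, (1 + x i) - 1| ≤ s.card * 2 ^ s.card * t := by
  induction s using Finset.cons_induction with
  | empty => simp
  | cons a s ha ih =>
    have hxs : ∀ i ∈ s, |x i| ≤ t := fun i hi => hx i (Finset.mem_cons_of_mem hi)
    have hxa : |x a| ≤ t := hx a (Finset.mem_cons_self a s)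
    have h2 : |1 + x a| ≤ 2 := by
      have := abs_add_le (1 : ℝ) (x a); simp at this; linarith
    have hP := ih hxs
    have hkey : ∏ i ∈ Finset.cons a s ha, (1 + x i) - 1
        = (∏ i ∈ s, (1 + x i) - 1) * (1 + x a) + x a := by
      rw [Finset.prod_cons]; ring
    rw [hkey, Finset.card_cons]
    have h1 : |(∏ i ∈ s, (1 + x i) - 1) * (1 + x a) + x a|
        ≤ |∏ i ∈ s, (1 + x i) - 1| * 2 + t := by
      calc _ ≤ |(∏ i ∈ s, (1 + x i) - 1)| * |(1 + x a)| + |x a| := by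
            rw [← abs_mul]; exact abs_add_le _ _
        _ ≤ _ := add_le_add (mul_le_mul_of_nonneg_left h2 (abs_nonneg _)) hxa
    have hpow : (1 : ℝ) ≤ 2 ^ s.card := one_le_pow₀ (by norm_num)
    have htp : t * 1 ≤ t * 2 ^ s.card := mul_le_mul_of_nonneg_left hpow ht0
    have h4 : (s.card : ℝ) * 2 ^ s.card * t * 2 + t ≤ ((s.card : ℝ) + 1) * 2 ^ (s.card + 1) * t := by
      rw [pow_succ (2:ℝ) s.card]; nlinarith
    push_cast
    nlinarith [abs_nonneg ((∏ i ∈ s, (1 + x i)) - 1)]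

lemma prod_one_add_taylor {ι : Type*} (s : Finset ι) (x : ι → ℝ) (t : ℝ)
    (ht0 : 0 ≤ t) (ht1 : t ≤ 1) (hx : ∀ i ∈ s, |x i| ≤ t) :
    |∏ i ∈ s, (1 + x i) - 1 - ∑ i ∈ s, x i| ≤ (s.card) ^ 2 * 2 ^ s.card * t ^ 2 := by
  induction s using Finset.cons_induction with
  | empty => simp
  | cons a s ha ih =>
    have hxs : ∀ i ∈ s, |x i| ≤ t := fun i hi => hx i (Finset.mem_cons_of_mem hi)
    have hxa : |x a| ≤ t := hx a (Finset.mem_cons_self a s)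
    have hP1 := prod_one_add_sub_one_le s x t ht0 ht1 hxs
    have hE := ih hxs
    have hkey : ∏ i ∈ Finset.cons a s ha, (1 + x i) - 1 - ∑ i ∈ Finset.cons a s ha, x i
        = (∏ i ∈ s, (1 + x i) - 1 - ∑ i ∈ s, x i) + x a * (∏ i ∈ s, (1 + x i) - 1) := by
      rw [Finset.prod_cons, Finset.sum_cons]; ring
    rw [hkey, Finset.card_cons]
    have habs : |(∏ i ∈ s, (1 + x i) - 1 - ∑ i ∈ s, x i) + x a * (∏ i ∈ s, (1 + x i) - 1)|
        ≤ (s.card) ^ 2 * 2 ^ s.card * t ^ 2 + t * ((s.card) * 2 ^ s.card * t) := by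
      calc _ ≤ |∏ i ∈ s, (1 + x i) - 1 - ∑ i ∈ s, x i| + |x a| * |∏ i ∈ s, (1 + x i) - 1| := by
            rw [← abs_mul]; exact abs_add_le _ _
        _ ≤ _ := add_le_add hE (mul_le_mul hxa hP1 (abs_nonneg _) ht0)
    have h2n : (0:ℝ) < 2 ^ s.card := by positivity
    have hc : (0:ℝ) ≤ s.card := Nat.cast_nonneg _
    have a1 : (0:ℝ) ≤ t^2 * 2^s.card := by positivity
    have a2 : (0:ℝ) ≤ t^2 * 2^s.card * s.card := by positivity
    have a3 : (0:ℝ) ≤ t^2 * 2^s.card * (s.card:ℝ)^2 := by positivity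
    have h4 : ((s.card:ℝ)) ^ 2 * 2 ^ s.card * t ^ 2 + t * ((s.card) * 2 ^ s.card * t)
        ≤ ((s.card : ℝ) + 1) ^ 2 * 2 ^ (s.card + 1) * t ^ 2 := by
      rw [pow_succ (2:ℝ) s.card]; nlinarith
    push_cast
    push_cast at habs h4
    linarith

lemma expand_prod {R : Type*} [Ring R] [Algebra ℝ R] (a b e f : R) (t : ℝ) :
    (1 - t•a + t^2•e) * (1 - t•b + t^2•f)
      = 1 - t•(a+b) + t^2•(a*b + e + f - t•(a*f + e*b) + t^2•(e*f)) := by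
  simp only [mul_sub, sub_mul, mul_add, add_mul, one_mul, mul_one, smul_mul_assoc,
    mul_smul_comm, smul_sub, smul_add, smul_smul]
  module

lemma key_est {R : Type*} [NormedRing R] [NormedAlgebra ℝ R] [NormOneClass R]
    (a b u w : R) (t τ D q m : ℝ)
    (ha : ‖a‖ ≤ 1) (hb : ‖b‖ ≤ 1) (ht0 : 0 ≤ t) (ht : t ≤ 1 / 2)
    (h1 : (1 + t • a) * u = 1) (h2 : w * (1 + t • b) = 1)
    (hD : D = 1 + t * τ + t ^ 2 * q) (hm1 : 1 ≤ m) (hτ : |τ| ≤ m) (hq : |q| ≤ m) :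
    ‖1 - D • (u * w) - t • (a + b - τ • (1 : R))‖ ≤ 64 * m * t ^ 2 := by
  have hu : u = 1 - t • (a * u) := by
    have h1' : u + t • (a * u) = 1 := by
      have := h1
      rw [add_mul, one_mul, smul_mul_assoc] at this
      exact this
    linear_combination (norm := module) h1'
  have hw : w = 1 - t • (w * b) := by
    have h2' : w + t • (w * b) = 1 := by
      have := h2
      rw [mul_add, mul_one, mul_smul_comm] at this
      exact this
    linear_combination (norm := module) h2'
  have hnu : ‖u‖ ≤ 2 := by
    have : ‖u‖ ≤ 1 + t * ‖u‖ := by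
      calc ‖u‖ = ‖1 - t • (a * u)‖ := by rw [← hu]
        _ ≤ ‖(1:R)‖ + ‖t • (a * u)‖ := norm_sub_le _ _
        _ = 1 + |t| * ‖a * u‖ := by rw [norm_one, norm_smul, Real.norm_eq_abs]
        _ ≤ 1 + t * ‖u‖ := by
            rw [abs_of_nonneg ht0]
            have h3 : ‖a * u‖ ≤ ‖u‖ := by
              calc ‖a * u‖ ≤ ‖a‖ * ‖u‖ := norm_mul_le _ _
                _ ≤ 1 * ‖u‖ := mul_le_mul_of_nonneg_right ha (norm_nonneg _)
                _ = ‖u‖ := one_mul _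
            nlinarith
    nlinarith [norm_nonneg u]
  have hnw : ‖w‖ ≤ 2 := by
    have : ‖w‖ ≤ 1 + t * ‖w‖ := by
      calc ‖w‖ = ‖1 - t • (w * b)‖ := by rw [← hw]
        _ ≤ ‖(1:R)‖ + ‖t • (w * b)‖ := norm_sub_le _ _
        _ = 1 + |t| * ‖w * b‖ := by rw [norm_one, norm_smul, Real.norm_eq_abs]
        _ ≤ 1 + t * ‖w‖ := by
            rw [abs_of_nonneg ht0]
            have h3 : ‖w * b‖ ≤ ‖w‖ := by
              calc ‖w * b‖ ≤ ‖w‖ * ‖b‖ := norm_mul_le _ _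
                _ ≤ ‖w‖ * 1 := mul_le_mul_of_nonneg_left hb (norm_nonneg _)
                _ = ‖w‖ := mul_one _
            nlinarith
    nlinarith [norm_nonneg w]
  set e := a * (a * u) with he_def
  set f := (w * b) * b with hf_def
  have hue : u = 1 - t • a + t ^ 2 • e := by
    have hau : a * u = a - t • e := by
      conv_lhs => rw [hu]
      rw [he_def, mul_sub, mul_one, mul_smul_comm]
    rw [hu, hau]
    rw [smul_sub, smul_smul, pow_two]
    abel
  have hwf : w = 1 - t • b + t ^ 2 • f := by
    have hwb : w * b = b - t • f := by
      conv_lhs => rw [hw]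
      rw [hf_def, sub_mul, one_mul, smul_mul_assoc]
    rw [hw, hwb]
    rw [smul_sub, smul_smul, pow_two]
    abel
  have hne : ‖e‖ ≤ 2 := by
    calc ‖e‖ ≤ ‖a‖ * ‖a * u‖ := norm_mul_le _ _
      _ ≤ ‖a‖ * (‖a‖ * ‖u‖) := by
          exact mul_le_mul_of_nonneg_left (norm_mul_le _ _) (norm_nonneg _)
      _ ≤ 1 * (1 * 2) := by
          apply mul_le_mul ha _ (by positivity) (by norm_num)
          exact mul_le_mul ha hnu (norm_nonneg _) (by norm_num)
      _ = 2 := by norm_num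
  have hnf : ‖f‖ ≤ 2 := by
    calc ‖f‖ ≤ ‖w * b‖ * ‖b‖ := norm_mul_le _ _
      _ ≤ (‖w‖ * ‖b‖) * ‖b‖ := by
          exact mul_le_mul_of_nonneg_right (norm_mul_le _ _) (norm_nonneg _)
      _ ≤ (2 * 1) * 1 := by
          apply mul_le_mul _ hb (norm_nonneg _) (by norm_num)
          exact mul_le_mul hnw hb (norm_nonneg _) (by norm_num)
      _ = 2 := by norm_num
  set W := a * b + e + f - t • (a * f + e * b) + t ^ 2 • (e * f) with hW_def
  have hprod : u * w = 1 - t • (a + b) + t ^ 2 • W := by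
    rw [hue, hwf]; exact expand_prod a b e f t
  have hnW : ‖W‖ ≤ 8 := by
    have h1' : ‖a * b‖ ≤ 1 := by
      calc ‖a * b‖ ≤ ‖a‖ * ‖b‖ := norm_mul_le _ _
        _ ≤ 1 * 1 := mul_le_mul ha hb (norm_nonneg _) (by norm_num)
        _ = 1 := one_mul 1
    have h2' : ‖a * f + e * b‖ ≤ 4 := by
      calc ‖a * f + e * b‖ ≤ ‖a * f‖ + ‖e * b‖ := norm_add_le _ _
        _ ≤ ‖a‖ * ‖f‖ + ‖e‖ * ‖b‖ := add_le_add (norm_mul_le _ _) (norm_mul_le _ _)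
        _ ≤ 1 * 2 + 2 * 1 := by
            apply add_le_add
            · exact mul_le_mul ha hnf (norm_nonneg _) (by norm_num)
            · exact mul_le_mul hne hb (norm_nonneg _) (by norm_num)
        _ = 4 := by norm_num
    have h3' : ‖e * f‖ ≤ 4 := by
      calc ‖e * f‖ ≤ ‖e‖ * ‖f‖ := norm_mul_le _ _
        _ ≤ 2 * 2 := mul_le_mul hne hnf (norm_nonneg _) (by norm_num)
        _ = 4 := by norm_num
    calc ‖W‖ ≤ ‖a * b + e + f - t • (a * f + e * b)‖ + ‖t ^ 2 • (e * f)‖ := norm_add_le _ _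
      _ ≤ (‖a * b + e + f‖ + ‖t • (a * f + e * b)‖) + ‖t ^ 2 • (e * f)‖ := by
          exact add_le_add_left (norm_sub_le _ _) _
      _ ≤ ((‖a * b‖ + ‖e‖ + ‖f‖) + |t| * ‖a * f + e * b‖) + |t ^ 2| * ‖e * f‖ := by
          apply add_le_add
          apply add_le_add
          · exact (norm_add_le _ _).trans (add_le_add_left (norm_add_le _ _) _)
          · rw [norm_smul, Real.norm_eq_abs]
          · rw [norm_smul, Real.norm_eq_abs]
      _ ≤ ((1 + 2 + 2) + (1/2) * 4) + (1/4) * 4 := by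
          apply add_le_add
          apply add_le_add
          · exact add_le_add (add_le_add h1' hne) hnf
          · apply mul_le_mul _ h2' (norm_nonneg _) (by norm_num)
            rw [abs_of_nonneg ht0]; exact ht
          · apply mul_le_mul _ h3' (norm_nonneg _) (by norm_num)
            rw [abs_of_nonneg (by positivity : (0:ℝ) ≤ t ^ 2)]
            nlinarith
      _ = 8 := by norm_num
  have hX : 1 - D • (u * w) - t • (a + b - τ • (1 : R))
      = t ^ 2 • ((-q) • (1 : R) + (τ + t * q) • (a + b) - D • W) := by
    rw [hprod, hD]
    match_scalars <;> ring
  rw [hX, norm_smul, Real.norm_eq_abs, abs_of_nonneg (by positivity : (0:ℝ) ≤ t ^ 2)]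
  have hnab : ‖a + b‖ ≤ 2 := by
    calc ‖a + b‖ ≤ ‖a‖ + ‖b‖ := norm_add_le _ _
      _ ≤ 1 + 1 := add_le_add ha hb
      _ = 2 := by norm_num
  have hDb : |D| ≤ 1 + m := by
    rw [hD]
    calc |1 + t * τ + t ^ 2 * q| ≤ |(1:ℝ)| + |t * τ| + |t ^ 2 * q| := (abs_add_le _ _).trans (add_le_add_left (abs_add_le _ _) _)
      _ ≤ 1 + (1/2) * m + (1/4) * m := by
          apply add_le_add; apply add_le_add
          · simp
          · rw [abs_mul, abs_of_nonneg ht0]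
            apply mul_le_mul ht hτ (abs_nonneg _) (by norm_num)
          · rw [abs_mul, abs_of_nonneg (by positivity : (0:ℝ) ≤ t ^ 2)]
            apply mul_le_mul _ hq (abs_nonneg _) (by norm_num)
            nlinarith
      _ ≤ 1 + m := by linarith
  have hinner : ‖(-q) • (1 : R) + (τ + t * q) • (a + b) - D • W‖ ≤ 64 * m := by
    calc ‖(-q) • (1 : R) + (τ + t * q) • (a + b) - D • W‖
        ≤ ‖(-q) • (1 : R) + (τ + t * q) • (a + b)‖ + ‖D • W‖ := norm_sub_le _ _
      _ ≤ (‖(-q) • (1 : R)‖ + ‖(τ + t * q) • (a + b)‖) + ‖D • W‖ :=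
          add_le_add_left (norm_add_le _ _) _
      _ = (|(-q)| * 1 + |τ + t * q| * ‖a + b‖) + |D| * ‖W‖ := by
          rw [norm_smul, norm_smul, norm_smul, Real.norm_eq_abs, Real.norm_eq_abs,
            Real.norm_eq_abs, norm_one]
      _ ≤ (m * 1 + (2 * m) * 2) + (1 + m) * 8 := by
          apply add_le_add; apply add_le_add
          · rw [abs_neg]
            exact mul_le_mul_of_nonneg_right hq (by norm_num)
          · apply mul_le_mul _ hnab (norm_nonneg _) (by nlinarith [abs_nonneg q])
            calc |τ + t * q| ≤ |τ| + |t * q| := abs_add_le _ _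
              _ ≤ m + m := by
                  apply add_le_add hτ
                  rw [abs_mul, abs_of_nonneg ht0]
                  nlinarith [abs_nonneg q]
              _ = 2 * m := by ring
          · apply mul_le_mul hDb hnW (norm_nonneg _) (by linarith)
      _ = 13 * m + 8 := by ring
      _ ≤ 64 * m := by linarith
  calc t ^ 2 * ‖(-q) • (1 : R) + (τ + t * q) • (a + b) - D • W‖
      ≤ t ^ 2 * (64 * m) := mul_le_mul_of_nonneg_left hinner (by positivity)
    _ = 64 * m * t ^ 2 := by ring

lemma tail_term_bound {d : ℕ} (A : Matrix (Fin d) (Fin d) ℝ) (hA : ∀ i j, |A i j| ≤ 1)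
    (t : ℝ) (ht0 : 0 ≤ t) (ht1 : t ≤ 1)
    (σ : Equiv.Perm (Fin d)) (hσ : σ ≠ 1) :
    |∏ i, ((1 : Matrix (Fin d) (Fin d) ℝ) + t • A) (σ i) i| ≤ 2 ^ d * t ^ 2 := by
  classical
  have hB : ∀ i j, ((1 : Matrix (Fin d) (Fin d) ℝ) + t • A) i j
      = (if i = j then 1 else 0) + t * A i j := by
    intro i j; simp [Matrix.one_apply, smul_eq_mul]
  rw [Finset.abs_prod]
  rw [← Finset.prod_mul_prod_compl σ.support]
  have h1 : ∏ i ∈ σ.support, |((1 : Matrix (Fin d) (Fin d) ℝ) + t • A) (σ i) i|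
      ≤ t ^ σ.support.card := by
    rw [← Finset.prod_const]
    apply Finset.prod_le_prod (fun i _ => abs_nonneg _)
    intro i hi
    have hne : σ i ≠ i := Equiv.Perm.mem_support.mp hi
    rw [hB, if_neg hne, zero_add, abs_mul, abs_of_nonneg ht0]
    calc t * |A (σ i) i| ≤ t * 1 := by
          exact mul_le_mul_of_nonneg_left (hA _ _) ht0
      _ = t := mul_one t
  have h2 : ∏ i ∈ σ.supportᶜ, |((1 : Matrix (Fin d) (Fin d) ℝ) + t • A) (σ i) i|
      ≤ 2 ^ d := by
    calc ∏ i ∈ σ.supportᶜ, |((1 : Matrix (Fin d) (Fin d) ℝ) + t • A) (σ i) i|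
        ≤ ∏ _i ∈ σ.supportᶜ, (2 : ℝ) := by
          apply Finset.prod_le_prod (fun i _ => abs_nonneg _)
          intro i hi
          have heq : σ i = i := by
            have := Finset.mem_compl.mp hi
            exact Equiv.Perm.notMem_support.mp this
          rw [hB, heq, if_pos rfl, abs_le]
          have hta : |t * A i i| ≤ 1 := by
            rw [abs_mul, abs_of_nonneg ht0]
            calc t * |A i i| ≤ 1 * 1 :=
                mul_le_mul ht1 (hA i i) (abs_nonneg _) (by norm_num)
              _ = 1 := one_mul 1
          have h' := abs_le.mp hta
          constructor <;> linarith [h'.1, h'.2]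
      _ = 2 ^ σ.supportᶜ.card := (Finset.prod_const 2)
      _ ≤ 2 ^ d := by
          apply pow_le_pow_right₀ (by norm_num)
          simpa using (Finset.card_le_univ σ.supportᶜ)
  have hts : t ^ σ.support.card ≤ t ^ 2 := by
    apply pow_le_pow_of_le_one ht0 ht1
    exact Equiv.Perm.one_lt_card_support_of_ne_one hσ
  have hnn : (0:ℝ) ≤ ∏ i ∈ σ.supportᶜ, |((1 : Matrix (Fin d) (Fin d) ℝ) + t • A) (σ i) i| :=
    Finset.prod_nonneg (fun i _ => abs_nonneg _)
  calc _ ≤ t ^ σ.support.card * 2 ^ d :=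
        mul_le_mul h1 h2 hnn (by positivity)
    _ ≤ t ^ 2 * 2 ^ d := mul_le_mul_of_nonneg_right hts (by positivity)
    _ = 2 ^ d * t ^ 2 := mul_comm _ _

lemma det_est {d : ℕ} (A : Matrix (Fin d) (Fin d) ℝ) (hA : ∀ i j, |A i j| ≤ 1)
    (t : ℝ) (ht0 : 0 ≤ t) (ht : t ≤ 1 / 2) :
    |((1 : Matrix (Fin d) (Fin d) ℝ) + t • A).det - 1 - t * A.trace|
      ≤ ((d : ℝ) ^ 2 * 2 ^ d + (d.factorial : ℝ) * 2 ^ d) * t ^ 2 := by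
  classical
  have ht1 : t ≤ 1 := by linarith
  set f : Equiv.Perm (Fin d) → ℝ :=
    fun σ => Equiv.Perm.sign σ • ∏ i, ((1 : Matrix (Fin d) (Fin d) ℝ) + t • A) (σ i) i with hf
  have hdet : ((1 : Matrix (Fin d) (Fin d) ℝ) + t • A).det = ∑ σ : Equiv.Perm (Fin d), f σ :=
    Matrix.det_apply _
  have hsplit : ∑ σ : Equiv.Perm (Fin d), f σ
      = f 1 + ∑ σ ∈ Finset.univ.erase 1, f σ :=
    (Finset.add_sum_erase _ f (Finset.mem_univ 1)).symm
  have hf1 : f 1 = ∏ i : Fin d, (1 + t * A i i) := by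
    simp [hf, Matrix.one_apply, smul_eq_mul]
  have htr : t * A.trace = ∑ i : Fin d, t * A i i := by
    rw [Matrix.trace, Finset.mul_sum]; rfl
  have hhead : |f 1 - 1 - t * A.trace| ≤ (d : ℝ) ^ 2 * 2 ^ d * t ^ 2 := by
    rw [hf1, htr]
    have := prod_one_add_taylor (Finset.univ : Finset (Fin d)) (fun i => t * A i i) t ht0 ht1
      (fun i _ => by
        rw [abs_mul, abs_of_nonneg ht0]
        calc t * |A i i| ≤ t * 1 := mul_le_mul_of_nonneg_left (hA i i) ht0
          _ = t := mul_one t)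
    simpa using this
  have htail : |∑ σ ∈ Finset.univ.erase 1, f σ|
      ≤ (d.factorial : ℝ) * 2 ^ d * t ^ 2 := by
    have hterm : ∀ σ ∈ Finset.univ.erase (1 : Equiv.Perm (Fin d)), |f σ| ≤ 2 ^ d * t ^ 2 := by
      intro σ hσ
      have hne : σ ≠ 1 := (Finset.mem_erase.mp hσ).1
      have habs : |f σ| = |∏ i, ((1 : Matrix (Fin d) (Fin d) ℝ) + t • A) (σ i) i| := by
        rcases Int.units_eq_one_or (Equiv.Perm.sign σ) with h | h <;>
          simp [hf, h, abs_neg]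
      rw [habs]
      exact tail_term_bound A hA t ht0 ht1 σ hne
    calc |∑ σ ∈ Finset.univ.erase 1, f σ| ≤ ∑ σ ∈ Finset.univ.erase 1, |f σ| :=
          Finset.abs_sum_le_sum_abs _ _
      _ ≤ (Finset.univ.erase (1 : Equiv.Perm (Fin d))).card • (2 ^ d * t ^ 2) :=
          Finset.sum_le_card_nsmul _ _ _ hterm
      _ = ((Finset.univ.erase (1 : Equiv.Perm (Fin d))).card : ℝ) * (2 ^ d * t ^ 2) :=
          nsmul_eq_mul _ _
      _ ≤ (d.factorial : ℝ) * (2 ^ d * t ^ 2) := by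
          apply mul_le_mul_of_nonneg_right _ (by positivity)
          have hcard : (Finset.univ.erase (1 : Equiv.Perm (Fin d))).card ≤ d.factorial := by
            calc (Finset.univ.erase (1 : Equiv.Perm (Fin d))).card
                ≤ (Finset.univ : Finset (Equiv.Perm (Fin d))).card := Finset.card_erase_le
              _ = d.factorial := by
                  rw [Finset.card_univ, Fintype.card_perm, Fintype.card_fin]
          exact_mod_cast hcard
      _ = (d.factorial : ℝ) * 2 ^ d * t ^ 2 := by ring
  calc |((1 : Matrix (Fin d) (Fin d) ℝ) + t • A).det - 1 - t * A.trace|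
      = |(f 1 - 1 - t * A.trace) + ∑ σ ∈ Finset.univ.erase 1, f σ| := by
        rw [hdet, hsplit]; ring_nf
    _ ≤ |f 1 - 1 - t * A.trace| + |∑ σ ∈ Finset.univ.erase 1, f σ| := abs_add_le _ _
    _ ≤ (d : ℝ) ^ 2 * 2 ^ d * t ^ 2 + (d.factorial : ℝ) * 2 ^ d * t ^ 2 :=
        add_le_add hhead htail
    _ = ((d : ℝ) ^ 2 * 2 ^ d + (d.factorial : ℝ) * 2 ^ d) * t ^ 2 := by ring

lemma entry_le_specNorm {d : ℕ} (A : Matrix (Fin d) (Fin d) ℝ) (i j : Fin d) :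
    |A i j| ≤ specNorm A := by
  classical
  set y : EuclideanSpace ℝ (Fin d) :=
    Matrix.toEuclideanCLM (𝕜 := ℝ) A (EuclideanSpace.single j 1) with hy
  have hyi : y i = A i j := by
    rw [hy]
    have : (EuclideanSpace.single j (1:ℝ)) = WithLp.toLp 2 (Pi.single j 1) := rfl
    rw [this, Matrix.toEuclideanCLM_toLp]
    simp [Matrix.toLin'_apply, Matrix.mulVec_single]
  have h1 : |y i| = |(inner ℝ (EuclideanSpace.single i (1:ℝ)) y : ℝ)| := by
    rw [EuclideanSpace.inner_single_left]; simp
  have h2 : |(inner ℝ (EuclideanSpace.single i (1:ℝ)) y : ℝ)| ≤ ‖EuclideanSpace.single i (1:ℝ)‖ * ‖y‖ :=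
    abs_real_inner_le_norm _ _
  have h3 : ‖EuclideanSpace.single i (1:ℝ)‖ = 1 := by
    rw [EuclideanSpace.norm_single]; norm_num
  have h4 : ‖y‖ ≤ specNorm A := by
    rw [hy]
    calc ‖Matrix.toEuclideanCLM (𝕜 := ℝ) A (EuclideanSpace.single j 1)‖
        ≤ ‖Matrix.toEuclideanCLM (𝕜 := ℝ) A‖ * ‖EuclideanSpace.single j (1:ℝ)‖ :=
          ContinuousLinearMap.le_opNorm _ _
      _ = specNorm A := by
          rw [EuclideanSpace.norm_single, norm_one, mul_one]; rfl
  have h2' : |(inner ℝ (EuclideanSpace.single i (1:ℝ)) y : ℝ)| ≤ 1 * ‖y‖ := by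
    rw [h3] at h2; exact h2
  calc |A i j| = |y i| := by rw [hyi]
    _ = _ := h1
    _ ≤ 1 * ‖y‖ := h2'
    _ ≤ specNorm A := by rw [one_mul]; exact h4

set_option maxHeartbeats 1000000 in
set_option synthInstance.maxHeartbeats 400000 in
/-- Expansion of the pulled-back coefficient matrix: for
`‖A‖ ≤ 1` and `t ∈ [0, 1/2]`, the matrix `B = I + t A` is invertible and
`I − B⁻¹ B⁻ᵀ det B = t (A + Aᵀ − trace(A) I) + O(t²)`, with a constant
depending only on `d`. -/
theorem stmt5 (d : ℕ) (hd : 1 ≤ d) :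
    ∃ c : ℝ, 0 < c ∧
      ∀ A : Matrix (Fin d) (Fin d) ℝ, specNorm A ≤ 1 →
        ∀ t ∈ Set.Icc (0 : ℝ) (1 / 2),
          IsUnit ((1 : Matrix (Fin d) (Fin d) ℝ) + t • A) ∧
          specNorm
            ((1 : Matrix (Fin d) (Fin d) ℝ)
              - ((1 : Matrix (Fin d) (Fin d) ℝ) + t • A).det •
                  (((1 : Matrix (Fin d) (Fin d) ℝ) + t • A)⁻¹ *
                    (((1 : Matrix (Fin d) (Fin d) ℝ) + t • A)⁻¹)ᵀ)
              - t • (A + Aᵀ - A.trace • (1 : Matrix (Fin d) (Fin d) ℝ)))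
            ≤ c * t ^ 2 := by
  classical
  haveI : Nonempty (Fin d) := Fin.pos_iff_nonempty.mp hd
  set m : ℝ := (d : ℝ) ^ 2 * 2 ^ d + (d.factorial : ℝ) * 2 ^ d + d + 1 with hm
  have hnn : (0:ℝ) ≤ (d : ℝ) ^ 2 * 2 ^ d + (d.factorial : ℝ) * 2 ^ d := by positivity
  have hdnn : (0:ℝ) ≤ (d:ℝ) := Nat.cast_nonneg d
  have hm1 : 1 ≤ m := by rw [hm]; linarith
  refine ⟨64 * m, by linarith, ?_⟩
  intro A hA t ht
  obtain ⟨ht0, ht2⟩ := ht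
  rcases eq_or_lt_of_le ht0 with h0 | htpos
  · -- the case t = 0
    subst h0
    have hB0 : (1 : Matrix (Fin d) (Fin d) ℝ) + (0:ℝ) • A = 1 := by simp
    rw [hB0]
    refine ⟨isUnit_one, ?_⟩
    simp only [Matrix.det_one, inv_one, Matrix.transpose_one, mul_one, one_smul,
      zero_smul, sub_zero, sub_self]
    have hz : specNorm (0 : Matrix (Fin d) (Fin d) ℝ) = 0 := by
      unfold specNorm; rw [_root_.map_zero, norm_zero]
    rw [hz]
    nlinarith
  · set φ := Matrix.toEuclideanCLM (𝕜 := ℝ) (n := Fin d) with hφ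
    set a := φ A with ha_def
    have ha : ‖a‖ ≤ 1 := hA
    have hsa : ‖star a‖ = ‖a‖ := by
      have h : star a = ContinuousLinearMap.adjoint a := rfl
      rw [h]
      exact LinearIsometryEquiv.norm_map ContinuousLinearMap.adjoint a
    have hta : ‖-(t • a)‖ < 1 := by
      rw [norm_neg]
      have hns : ‖t • a‖ = ‖t‖ * ‖a‖ := norm_smul t a
      rw [hns, Real.norm_eq_abs, abs_of_nonneg ht0]
      nlinarith [norm_nonneg a]
    set v := Units.oneSub (-(t • a)) hta with hv
    have hvval : (v : EuclideanSpace ℝ (Fin d) →L[ℝ] EuclideanSpace ℝ (Fin d)) = 1 + t • a := by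
      rw [hv, Units.val_oneSub, sub_neg_eq_add]
    set B := (1 : Matrix (Fin d) (Fin d) ℝ) + t • A with hB
    have hφB : φ B = 1 + t • a := by
      rw [hB]
      calc φ (1 + t • A) = φ 1 + φ (t • A) := _root_.map_add _ _ _
        _ = 1 + t • a := by rw [_root_.map_one, _root_.map_smul]
    set C := φ.symm ((v⁻¹ : _ˣ) : EuclideanSpace ℝ (Fin d) →L[ℝ] EuclideanSpace ℝ (Fin d))
      with hC
    have hφBC : φ (B * C) = φ 1 := by
      calc φ (B * C) = φ B * φ C := _root_.map_mul _ _ _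
        _ = (1 + t • a) * ((v⁻¹ : _ˣ) : _) := by
            rw [hφB, hC, StarAlgEquiv.apply_symm_apply]
        _ = (v : _) * ((v⁻¹ : _ˣ) : _) := by rw [hvval]
        _ = 1 := Units.mul_inv v
        _ = φ 1 := (_root_.map_one φ).symm
    have hBC : B * C = 1 := φ.injective hφBC
    have hUdet : IsUnit B.det :=
      IsUnit.of_mul_eq_one C.det (by rw [← Matrix.det_mul, hBC, Matrix.det_one])
    have hUB : IsUnit B := (Matrix.isUnit_iff_isUnit_det B).mpr hUdet
    refine ⟨hUB, ?_⟩
    set τ := A.trace with hτdef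
    set q := (B.det - 1 - t * τ) / t ^ 2 with hqdef
    have ht2pos : (0:ℝ) < t ^ 2 := by positivity
    have hD : B.det = 1 + t * τ + t ^ 2 * q := by
      rw [hqdef]; field_simp; ring
    have hentry : ∀ i j, |A i j| ≤ 1 := fun i j => (entry_le_specNorm A i j).trans hA
    have hdet := det_est A hentry t ht0 ht2
    have hq : |q| ≤ m := by
      rw [hqdef, abs_div, abs_of_nonneg ht2pos.le, div_le_iff₀ ht2pos]
      have h' : |B.det - 1 - t * τ|
          ≤ ((d : ℝ) ^ 2 * 2 ^ d + (d.factorial : ℝ) * 2 ^ d) * t ^ 2 := by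
        rw [hB, hτdef]; exact hdet
      refine h'.trans ?_
      apply mul_le_mul_of_nonneg_right _ ht2pos.le
      rw [hm]; linarith
    have hτ : |τ| ≤ m := by
      have htr : |A.trace| ≤ (d : ℝ) := by
        rw [Matrix.trace]
        calc |∑ i, A.diag i| ≤ ∑ i, |A.diag i| := Finset.abs_sum_le_sum_abs _ _
          _ ≤ ∑ _i : Fin d, (1:ℝ) := Finset.sum_le_sum (fun i _ => hentry i i)
          _ = (d : ℝ) := by simp
      rw [hτdef, hm]
      linarith
    have hBi1 : B * B⁻¹ = 1 := Matrix.mul_nonsing_inv B hUdet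
    set u := φ B⁻¹ with hu_def
    have h1 : (1 + t • a) * u = 1 := by
      rw [← hφB, hu_def, ← _root_.map_mul, hBi1, _root_.map_one]
    have h2 : star u * (1 + t • star a) = 1 := by
      have hst := congrArg star h1
      rw [star_mul, star_one] at hst
      have e : star (1 + t • a) = 1 + t • star a := by
        rw [star_add (R := EuclideanSpace ℝ (Fin d) →L[ℝ] EuclideanSpace ℝ (Fin d)), star_one,
          star_smul, star_trivial]
      rw [e] at hst
      exact hst
    have hT : ∀ M : Matrix (Fin d) (Fin d) ℝ, Mᵀ = star M := by
      intro M; ext i j; simp [Matrix.star_eq_conjTranspose, Matrix.conjTranspose_apply]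
    have hrw : specNorm (1 - B.det • (B⁻¹ * B⁻¹ᵀ) - t • (A + Aᵀ - τ • 1))
        = ‖(1 : EuclideanSpace ℝ (Fin d) →L[ℝ] EuclideanSpace ℝ (Fin d))
            - B.det • (u * star u) - t • (a + star a - τ • 1)‖ := by
      unfold specNorm
      rw [hT B⁻¹, hT A]
      simp only [_root_.map_sub, _root_.map_add, _root_.map_smul, _root_.map_mul,
        _root_.map_one, map_star]
      rfl
    calc specNorm (1 - B.det • (B⁻¹ * B⁻¹ᵀ) - t • (A + Aᵀ - τ • 1))
        = ‖(1 : EuclideanSpace ℝ (Fin d) →L[ℝ] EuclideanSpace ℝ (Fin d))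
            - B.det • (u * star u) - t • (a + star a - τ • 1)‖ := hrw
      _ ≤ 64 * m * t ^ 2 :=
          key_est a (star a) u (star u) t τ B.det q m ha (by rw [hsa]; exact ha)
            ht0 ht2 h1 h2 hD hm1 hτ hq
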